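/- Let Ω ⊆ ℝ³ be a connected open set and let u, w : Ω → ℍ be differentiable maps with |u(y)| = |w(y)| = 1 for all y ∈ Ω. If u(y)*·Du(y)v = w(y)*·Dw(y)v for every y ∈ Ω and every v ∈ ℝ³, then there exists a constant unit quaternion c such that w(y) = c·u(y) for all y ∈ Ω. (A flat connection with trivial holonomy determines its developing map uniquely up to left multiplication by a constant unit quaternion.) -/
import Mathlib


open Quaternion

/-- A function locally constant on an open preconnected set is constant there. -/
lemma const_of_locally_const {E : Type*} [NormedAddCommGroup E] [NormedSpace ℝ E]
    {α : Type*} {s : Set E} (hso : IsOpen s) (hsc : IsPreconnected s)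
    {f : E → α}
    (hloc : ∀ y ∈ s, ∃ ε > 0, Metric.ball y ε ⊆ s ∧ ∀ z ∈ Metric.ball y ε, f z = f y)
    {x : E} (hx : x ∈ s) : ∀ y ∈ s, f y = f x := by
  intro y hy
  by_contra hne
  set U : Set E := {z | ∃ ε > 0, Metric.ball z ε ⊆ s ∧ ∀ w ∈ Metric.ball z ε, f w = f x}
  set V : Set E := {z | ∃ ε > 0, Metric.ball z ε ⊆ s ∧ ∀ w ∈ Metric.ball z ε, f w ≠ f x}
  have hUo : IsOpen U := by
    apply Metric.isOpen_iff.2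
    rintro z ⟨ε, hε, hsub, hconst⟩
    refine ⟨ε / 2, by linarith, fun z' hz' => ?_⟩
    refine ⟨ε / 2, by linarith, ?_, fun w hw => hconst w ?_⟩
    · intro w hw
      apply hsub
      calc dist w z ≤ dist w z' + dist z' z := dist_triangle _ _ _
        _ < ε / 2 + ε / 2 := add_lt_add hw (Metric.mem_ball.1 hz')
        _ = ε := by ring
    · calc dist w z ≤ dist w z' + dist z' z := dist_triangle _ _ _
        _ < ε / 2 + ε / 2 := add_lt_add hw (Metric.mem_ball.1 hz')
        _ = ε := by ring
  have hVo : IsOpen V := by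
    apply Metric.isOpen_iff.2
    rintro z ⟨ε, hε, hsub, hconst⟩
    refine ⟨ε / 2, by linarith, fun z' hz' => ?_⟩
    refine ⟨ε / 2, by linarith, ?_, fun w hw => hconst w ?_⟩
    · intro w hw
      apply hsub
      calc dist w z ≤ dist w z' + dist z' z := dist_triangle _ _ _
        _ < ε / 2 + ε / 2 := add_lt_add hw (Metric.mem_ball.1 hz')
        _ = ε := by ring
    · calc dist w z ≤ dist w z' + dist z' z := dist_triangle _ _ _
        _ < ε / 2 + ε / 2 := add_lt_add hw (Metric.mem_ball.1 hz')
        _ = ε := by ring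
  have hcover : s ⊆ U ∪ V := by
    intro z hz
    obtain ⟨ε, hε, hsub, hconst⟩ := hloc z hz
    by_cases hcase : f z = f x
    · left; exact ⟨ε, hε, hsub, fun w hw => (hconst w hw).trans hcase⟩
    · right; exact ⟨ε, hε, hsub, fun w hw => (hconst w hw).symm ▸ hcase⟩
  have hxU : x ∈ U := by
    obtain ⟨ε, hε, hsub, hconst⟩ := hloc x hx
    exact ⟨ε, hε, hsub, hconst⟩
  have hyV : y ∈ V := by
    obtain ⟨ε, hε, hsub, hconst⟩ := hloc y hy
    exact ⟨ε, hε, hsub, fun w hw => (hconst w hw).symm ▸ hne⟩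
  obtain ⟨z, hzs, hzU, hzV⟩ := hsc U V hUo hVo hcover ⟨x, hx, hxU⟩ ⟨y, hy, hyV⟩
  obtain ⟨ε₁, hε₁, _, hc₁⟩ := hzU
  obtain ⟨ε₂, hε₂, _, hc₂⟩ := hzV
  exact hc₂ z (Metric.mem_ball_self hε₂) (hc₁ z (Metric.mem_ball_self hε₁))

instance : StarModule ℝ ℍ[ℝ] := ⟨fun r a => by ext <;> simp⟩

/-- On a connected open set `Ω ⊆ ℝ³`, two differentiable unit-quaternion-valued
maps `u, w` with the same connection form `u* du = w* dw` differ by left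
multiplication by a constant unit quaternion: a flat connection with trivial
holonomy determines its developing map up to a constant. -/
theorem developing_map_unique_up_to_constant
    (Ω : Set (EuclideanSpace ℝ (Fin 3))) (hΩo : IsOpen Ω) (hΩc : IsConnected Ω)
    (u w : EuclideanSpace ℝ (Fin 3) → ℍ[ℝ])
    (hu : ∀ y ∈ Ω, DifferentiableAt ℝ u y)
    (hw : ∀ y ∈ Ω, DifferentiableAt ℝ w y)
    (hu_unit : ∀ y ∈ Ω, ‖u y‖ = 1) (hw_unit : ∀ y ∈ Ω, ‖w y‖ = 1)
    (h : ∀ y ∈ Ω, ∀ v : EuclideanSpace ℝ (Fin 3),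
      star (u y) * fderiv ℝ u y v = star (w y) * fderiv ℝ w y v) :
    ∃ c : ℍ[ℝ], ‖c‖ = 1 ∧ ∀ y ∈ Ω, w y = c * u y := by
  obtain ⟨y₀, hy₀⟩ := hΩc.nonempty
  -- unit norm facts
  have hu1 : ∀ y ∈ Ω, star (u y) * u y = 1 := by
    intro y hy
    have h1 : normSq (u y) = 1 := by
      rw [Quaternion.normSq_eq_norm_mul_self, hu_unit y hy, mul_one]
    rw [Quaternion.star_mul_self, h1]; simp
  have hu1' : ∀ y ∈ Ω, u y * star (u y) = 1 := by
    intro y hy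
    have h1 : normSq (u y) = 1 := by
      rw [Quaternion.normSq_eq_norm_mul_self, hu_unit y hy, mul_one]
    rw [Quaternion.self_mul_star, h1]; simp
  have hw1' : ∀ y ∈ Ω, w y * star (w y) = 1 := by
    intro y hy
    have h1 : normSq (w y) = 1 := by
      rw [Quaternion.normSq_eq_norm_mul_self, hw_unit y hy, mul_one]
    rw [Quaternion.self_mul_star, h1]; simp
  set g : EuclideanSpace ℝ (Fin 3) → ℍ[ℝ] := fun y => w y * star (u y) with hg_def
  -- derivative of g is zero on Ω
  have hg_deriv : ∀ y ∈ Ω, HasFDerivAt g (0 : EuclideanSpace ℝ (Fin 3) →L[ℝ] ℍ[ℝ]) y := by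
    intro y hy
    have hAu := (hu y hy).hasFDerivAt
    have hBw := (hw y hy).hasFDerivAt
    set A := fderiv ℝ u y
    set B := fderiv ℝ w y
    -- key: star (A v) * u y + star (u y) * A v = 0
    have key : ∀ v, star (A v) * u y + star (u y) * A v = 0 := by
      intro v
      have h1 : HasFDerivAt (fun z => star (u z) * u z)
          (star (u y) • A + ((((starL' ℝ : ℍ[ℝ] ≃L[ℝ] ℍ[ℝ]) :
            ℍ[ℝ] →L[ℝ] ℍ[ℝ]) ∘L A)).smulRight (u y)) y :=
        hAu.star.mul' hAu
      have h2 : HasFDerivAt (fun z => star (u z) * u z)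
          (0 : EuclideanSpace ℝ (Fin 3) →L[ℝ] ℍ[ℝ]) y := by
        have heq : (fun z => star (u z) * u z) =ᶠ[nhds y] (fun _ => (1 : ℍ[ℝ])) := by
          filter_upwards [hΩo.mem_nhds hy] with z hz
          exact hu1 z hz
        exact (hasFDerivAt_const (1 : ℍ[ℝ]) y).congr_of_eventuallyEq heq
      have := h1.unique h2
      have hv := congrFun (congrArg DFunLike.coe this) v
      simpa [ContinuousLinearMap.smulRight_apply, smul_eq_mul, add_comm,
        mul_comm] using hv
    -- hypothesis at y
    have hyp := h y hy
    -- composite derivative of g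
    have hD : HasFDerivAt g
        (w y • (((starL' ℝ : ℍ[ℝ] ≃L[ℝ] ℍ[ℝ]) : ℍ[ℝ] →L[ℝ] ℍ[ℝ]) ∘L A)
          + B.smulRight (star (u y))) y :=
      hBw.mul' hAu.star
    have hzero : (w y • (((starL' ℝ : ℍ[ℝ] ≃L[ℝ] ℍ[ℝ]) : ℍ[ℝ] →L[ℝ] ℍ[ℝ]) ∘L A)
        + B.smulRight (star (u y))) = (0 : EuclideanSpace ℝ (Fin 3) →L[ℝ] ℍ[ℝ]) := by
      refine ContinuousLinearMap.ext fun v => ?_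
      simp only [ContinuousLinearMap.add_apply, ContinuousLinearMap.smul_apply,
      ContinuousLinearMap.smulRight_apply, ContinuousLinearMap.comp_apply,
      ContinuousLinearMap.zero_apply, smul_eq_mul]
      have hstar : ((starL' ℝ : ℍ[ℝ] ≃L[ℝ] ℍ[ℝ]) : ℍ[ℝ] →L[ℝ] ℍ[ℝ]) (A v) = star (A v) := rfl
      rw [hstar]
      -- B v = w y * (star (u y) * A v)
      have hBv : B v = w y * (star (u y) * A v) := by
        have : w y * (star (w y) * B v) = B v := by
          rw [← mul_assoc, hw1' y hy, one_mul]
        rw [← this, ← hyp v]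
      -- star (A v) = -(star (u y) * A v) * star (u y)
      have e1 : star (A v) * u y = -(star (u y) * A v) :=
        eq_neg_of_add_eq_zero_left (key v)
      have e2 : star (A v) = -(star (u y) * A v) * star (u y) := by
        calc star (A v) = star (A v) * (u y * star (u y)) := by rw [hu1' y hy, mul_one]
          _ = (star (A v) * u y) * star (u y) := by rw [mul_assoc]
          _ = -(star (u y) * A v) * star (u y) := by rw [e1]
      rw [e2, hBv]
      noncomm_ring
    exact hzero ▸ hD
  -- g is locally constant on Ω, hence constant
  have hloc : ∀ y ∈ Ω, ∃ ε > 0, Metric.ball y ε ⊆ Ω ∧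
      ∀ z ∈ Metric.ball y ε, g z = g y := by
    intro y hy
    obtain ⟨ε, hε, hsub⟩ := Metric.isOpen_iff.1 hΩo y hy
    refine ⟨ε, hε, hsub, fun z hz => ?_⟩
    refine (convex_ball y ε).is_const_of_fderivWithin_eq_zero
      (fun p hp => ((hg_deriv p (hsub hp)).differentiableAt).differentiableWithinAt)
      (fun p hp => ?_) hz (Metric.mem_ball_self hε)
    exact ((hg_deriv p (hsub hp)).hasFDerivWithinAt).fderivWithin
      ((Metric.isOpen_ball).uniqueDiffWithinAt hp)
  have hconst : ∀ y ∈ Ω, g y = g y₀ :=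
    const_of_locally_const hΩo hΩc.isPreconnected hloc hy₀
  refine ⟨g y₀, ?_, ?_⟩
  · show ‖w y₀ * star (u y₀)‖ = 1
    rw [norm_mul, Quaternion.norm_star, hw_unit y₀ hy₀, hu_unit y₀ hy₀, mul_one]
  · intro y hy
    have : g y * u y = w y := by
      show w y * star (u y) * u y = w y
      rw [mul_assoc, hu1 y hy, mul_one]
    rw [← hconst y hy, this]
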